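/- Let (W,S) be a finite Coxeter system and R its family of R-polynomials. For all u ≤ w in Bruhat order with ℓ(u,w) = n ≥ 1: 1 ≤ R_{u,w}(2) ≤ d_n(1) and n ≤ R′_{u,w}(2) ≤ d_n′(1), where R′ denotes the derivative. Moreover the bounds are given by Jacobsthal-type numbers: 3·d_n(1) = 2^n − (−1)^n (so d_n(1) = J_n, the n-th Jacobsthal number defined by J₀ = 0, J₁ = 1, J_n = J_{n−1} + 2J_{n−2}), and 9·d_n′(1) = 2·(2^n − (−1)^n) + 3n·2^{n−1}. -/

import Mathlib

open Polynomial

/-- A Bruhat edge `u → v`: `v = u * t` for some reflection `t`, and `ℓ(u) < ℓ(v)`. -/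
def BruhatEdge {B W : Type*} [Group W] {M : CoxeterMatrix B}
    (cs : CoxeterSystem M W) (u v : W) : Prop :=
  ∃ t : W, cs.IsReflection t ∧ v = u * t ∧ cs.length u < cs.length v

/-- Bruhat order: the reflexive-transitive closure of the Bruhat edge relation. -/
def BruhatLE {B W : Type*} [Group W] {M : CoxeterMatrix B}
    (cs : CoxeterSystem M W) : W → W → Prop :=
  Relation.ReflTransGen (BruhatEdge cs)

/-- The defining properties of the family of `R`-polynomials. -/
def IsRFamily {B W : Type*} [Group W] {M : CoxeterMatrix B}
    (cs : CoxeterSystem M W) (R : W → W → Polynomial ℤ) : Prop :=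
  (∀ u w, ¬ BruhatLE cs u w → R u w = 0) ∧
  (∀ w, R w w = 1) ∧
  (∀ u w, ∀ i : B, cs.length (w * cs.simple i) < cs.length w →
    (cs.length (u * cs.simple i) < cs.length u →
      R u w = R (u * cs.simple i) (w * cs.simple i)) ∧
    (cs.length u < cs.length (u * cs.simple i) →
      R u w = (X - 1) * R u (w * cs.simple i)
        + X * R (u * cs.simple i) (w * cs.simple i)))

/-- The defining properties of the family of `R̃`-polynomials. -/
def IsRTildeFamily {B W : Type*} [Group W] {M : CoxeterMatrix B}
    (cs : CoxeterSystem M W) (Rt : W → W → Polynomial ℕ) : Prop :=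
  (∀ u w, ¬ BruhatLE cs u w → Rt u w = 0) ∧
  (∀ w, Rt w w = 1) ∧
  (∀ u w, ∀ i : B, cs.length (w * cs.simple i) < cs.length w →
    (cs.length (u * cs.simple i) < cs.length u →
      Rt u w = Rt (u * cs.simple i) (w * cs.simple i)) ∧
    (cs.length u < cs.length (u * cs.simple i) →
      Rt u w = X * Rt u (w * cs.simple i)
        + Rt (u * cs.simple i) (w * cs.simple i)))

/-- Dihedral polynomials. -/
noncomputable def dPoly : ℕ → Polynomial ℤ
  | 0 => 1
  | 1 => X
  | 2 => X ^ 2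
  | (n + 3) => X * dPoly (n + 2) + (X + 1) * dPoly (n + 1)

/-- The degree of a vertex `x` in the Bruhat graph on the vertex set `V`:
the total number of incident edges (incoming plus outgoing). -/
noncomputable def degIn {B W : Type*} [Group W] {M : CoxeterMatrix B}
    (cs : CoxeterSystem M W) (V : Set W) (x : W) : ℕ :=
  Nat.card {y : W // y ∈ V ∧ (BruhatEdge cs x y ∨ BruhatEdge cs y x)}

/-- The Bruhat graph on the vertex set `V` is regular: all vertices have the same degree. -/
def IsRegularOn {B W : Type*} [Group W] {M : CoxeterMatrix B}
    (cs : CoxeterSystem M W) (V : Set W) : Prop :=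
  ∀ x ∈ V, ∀ y ∈ V, degIn cs V x = degIn cs V y

/-- Jacobsthal numbers. -/
def jacobsthal : ℕ → ℤ
  | 0 => 0
  | 1 => 1
  | (n + 2) => jacobsthal (n + 1) + 2 * jacobsthal n

namespace StmtAux

open CoxeterSystem List
open scoped Classical

variable {B W : Type*} [Group W] {M : CoxeterMatrix B} (cs : CoxeterSystem M W)

local prefix:100 "σ" => cs.simple
local prefix:100 "πw" => cs.wordProd
local prefix:100 "ℓ" => cs.length

/-- auxiliary generic group fact -/
lemma conj_eq_iff {G : Type*} [Group G] (g x t : G) :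
    g * t * g⁻¹ = x ↔ t = g⁻¹ * x * g := by
  constructor
  · rintro rfl; group
  · rintro rfl; group

noncomputable def etaFun (i : B) : W × ZMod 2 → W × ZMod 2 :=
  fun p => (σ i * p.1 * σ i, p.2 + if p.1 = σ i then 1 else 0)

lemma zmod2_add_self (x : ZMod 2) : x + x = 0 := by revert x; decide

lemma zmod2_eq_zero_of_ne_one {x : ZMod 2} (h : x ≠ 1) : x = 0 := by revert x; decide

lemma etaFun_invol (i : B) : Function.Involutive (etaFun cs i) := by
  intro ⟨t, e⟩
  have h1 : σ i * (σ i * t * σ i) * σ i = t := by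
    simp [mul_assoc]
  have h2 : (σ i * t * σ i = σ i) ↔ (t = σ i) := by
    constructor
    · intro h
      have := congrArg (fun x => σ i * x * σ i) h
      simpa [mul_assoc] using this
    · intro h; rw [h]; simp
  simp only [etaFun, h1, h2]
  by_cases h : t = σ i <;> simp [h, zmod2_add_self, add_assoc]

noncomputable def eta (i : B) : Equiv.Perm (W × ZMod 2) := (etaFun_invol cs i).toPerm

lemma eta_apply (i : B) (t : W) (e : ZMod 2) :
    eta cs i (t, e) = (σ i * t * σ i, e + if t = σ i then 1 else 0) := rfl

lemma sum_range_two_mul {Mo : Type*} [AddCommMonoid Mo] (m : ℕ) (f : ℕ → Mo) :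
    ∑ r ∈ Finset.range (2*m), f r = ∑ k ∈ Finset.range m, (f (2*k) + f (2*k+1)) := by
  induction m with
  | zero => simp
  | succ m ih =>
    rw [Finset.sum_range_succ, ← ih, show 2*(m+1) = (2*m+1)+1 by ring,
      Finset.sum_range_succ, Finset.sum_range_succ]
    rw [add_assoc]

lemma sum_range_split {Mo : Type*} [AddCommMonoid Mo] (a b : ℕ) (f : ℕ → Mo) :
    ∑ r ∈ Finset.range (a+b), f r
      = (∑ r ∈ Finset.range a, f r) + ∑ r ∈ Finset.range b, f (a+r) := by
  induction b with
  | zero => simp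
  | succ b ih =>
    rw [show a+(b+1) = (a+b)+1 by ring, Finset.sum_range_succ, ih, Finset.sum_range_succ,
      add_assoc]

section etapow

variable (i j : B)

lemma pi_inv_sj : (σ i * σ j)⁻¹ * σ j = σ j * (σ i * σ j) := by
  simp [mul_assoc]

lemma cond_shift (t : W) (m : ℕ) :
    ((σ i * σ j) * t * (σ i * σ j)⁻¹ = σ j * (σ i * σ j)^m)
      ↔ (t = σ j * (σ i * σ j)^(m+2)) := by
  rw [conj_eq_iff]
  have h1 : (σ i * σ j)⁻¹ * σ j = σ j * (σ i * σ j) := pi_inv_sj cs i j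
  have key : (σ i * σ j)⁻¹ * (σ j * (σ i * σ j)^m) * (σ i * σ j)
      = σ j * (σ i * σ j)^(m+2) := by
    calc (σ i * σ j)⁻¹ * (σ j * (σ i * σ j)^m) * (σ i * σ j)
        = ((σ i * σ j)⁻¹ * σ j) * ((σ i * σ j)^m * (σ i * σ j)) := by
          generalize (σ i * σ j) = p; group
      _ = σ j * ((σ i * σ j) * ((σ i * σ j)^m * (σ i * σ j))) := by
          rw [h1]; generalize (σ i * σ j) = p; group
      _ = σ j * (σ i * σ j)^(m+2) := by rw [← pow_succ, ← pow_succ']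
  rw [key]

lemma eta_mul_apply (t : W) (e : ZMod 2) :
    (eta cs i * eta cs j) (t, e)
        = ((σ i * σ j) * t * (σ i * σ j)⁻¹,
            e + ((if t = σ j * (σ i * σ j)^(2*0) then 1 else 0)
               + (if t = σ j * (σ i * σ j)^(2*0+1) then 1 else 0))) := by
  rw [Equiv.Perm.mul_apply, eta_apply, eta_apply]
  have h1 : σ i * (σ j * t * σ j) * σ i = (σ i * σ j) * t * (σ i * σ j)⁻¹ := by
    simp [mul_assoc]
  have h2 : (σ j * t * σ j = σ i) ↔ (t = σ j * (σ i * σ j)^(2*0+1)) := by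
    simp only [pow_one, mul_zero, zero_add]
    constructor
    · intro h
      have := congrArg (fun x => σ j * x * σ j) h
      simpa [mul_assoc] using this
    · intro h; rw [h]; simp [mul_assoc]
  have h3 : (t = σ j) ↔ (t = σ j * (σ i * σ j)^(2*0)) := by simp
  rw [h1, if_congr h2 rfl rfl, if_congr h3.symm rfl rfl, add_assoc]

lemma eta_pow_apply (n : ℕ) (t : W) (e : ZMod 2) :
    ((eta cs i * eta cs j) ^ n) (t, e) =
      ((σ i * σ j)^n * t * ((σ i * σ j)^n)⁻¹,
        e + ∑ k ∈ Finset.range n,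
          ((if t = σ j * (σ i * σ j)^(2*k) then 1 else 0) +
           (if t = σ j * (σ i * σ j)^(2*k+1) then 1 else 0))) := by
  induction n generalizing t e with
  | zero => simp
  | succ n ih =>
    rw [pow_succ, Equiv.Perm.mul_apply, eta_mul_apply, ih]
    refine Prod.ext ?_ ?_
    · show (σ i * σ j)^n * ((σ i * σ j) * t * (σ i * σ j)⁻¹) * ((σ i * σ j)^n)⁻¹ = _
      generalize (σ i * σ j) = p
      group
    · show _ + ∑ k ∈ Finset.range n, _ = _ + ∑ k ∈ Finset.range (n+1), _
      rw [Finset.sum_range_succ']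
      have hcong : ∀ k ∈ Finset.range n,
          ((if (σ i * σ j) * t * (σ i * σ j)⁻¹ = σ j * (σ i * σ j)^(2*k) then (1:ZMod 2) else 0)
            + (if (σ i * σ j) * t * (σ i * σ j)⁻¹ = σ j * (σ i * σ j)^(2*k+1) then 1 else 0))
          = ((if t = σ j * (σ i * σ j)^(2*(k+1)) then 1 else 0)
            + (if t = σ j * (σ i * σ j)^(2*(k+1)+1) then 1 else 0)) := by
        intro k _
        rw [if_congr (cond_shift cs i j t (2*k)) rfl rfl,
          if_congr (cond_shift cs i j t (2*k+1)) rfl rfl,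
          show 2*k+2 = 2*(k+1) by ring, show 2*k+1+2 = 2*(k+1)+1 by ring]
      rw [Finset.sum_congr rfl hcong]
      ring

end etapow

lemma eta_liftable : M.IsLiftable (fun i => eta cs i) := by
  intro i j
  apply Equiv.ext
  rintro ⟨t, e⟩
  rw [show ((fun i => eta cs i) i * (fun i => eta cs i) j) = eta cs i * eta cs j from rfl]
  rw [eta_pow_apply, cs.simple_mul_simple_pow]
  have hsum : ∑ k ∈ Finset.range (M.M i j),
      ((if t = σ j * (σ i * σ j)^(2*k) then (1 : ZMod 2) else 0) +
       (if t = σ j * (σ i * σ j)^(2*k+1) then 1 else 0))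
      = 0 := by
    rw [← sum_range_two_mul (M.M i j) (fun r => if t = σ j * (σ i * σ j)^r then (1:ZMod 2) else 0)]
    rw [show 2 * M.M i j = M.M i j + M.M i j by ring, sum_range_split]
    have : ∀ r ∈ Finset.range (M.M i j),
        (if t = σ j * (σ i * σ j)^(M.M i j + r) then (1:ZMod 2) else 0)
        = (if t = σ j * (σ i * σ j)^r then (1:ZMod 2) else 0) := by
      intro r _
      rw [pow_add, cs.simple_mul_simple_pow, one_mul]
    rw [Finset.sum_congr rfl this, zmod2_add_self]
  rw [hsum]
  simp

noncomputable def phi : W →* Equiv.Perm (W × ZMod 2) :=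
  cs.lift ⟨fun i => eta cs i, eta_liftable cs⟩

lemma phi_simple (i : B) : phi cs (σ i) = eta cs i :=
  cs.lift_apply_simple (eta_liftable cs) i

noncomputable def nn (w t : W) : ZMod 2 := ((phi cs w) (t, 0)).2

lemma phi_apply (w : W) : ∀ t : W, ∀ e : ZMod 2,
    phi cs w (t, e) = (w * t * w⁻¹, e + nn cs w t) := by
  induction w using cs.simple_induction_left with
  | one => intro t e; simp [nn]
  | mul_simple_left w i ih =>
    intro t e
    have key : ∀ e : ZMod 2, phi cs (σ i * w) (t, e)
        = (σ i * (w * t * w⁻¹) * σ i,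
            e + (nn cs w t + if w * t * w⁻¹ = σ i then 1 else 0)) := by
      intro e
      rw [map_mul, Equiv.Perm.mul_apply, ih t e, phi_simple, eta_apply, add_assoc]
    have hnn : nn cs (σ i * w) t = nn cs w t + if w * t * w⁻¹ = σ i then 1 else 0 := by
      rw [nn, key 0, zero_add]
    rw [key e, hnn]
    congr 1
    simp [mul_assoc]

lemma nn_mul (w v t : W) : nn cs (w * v) t = nn cs v t + nn cs w (v * t * v⁻¹) := by
  have : phi cs (w * v) (t, 0) = phi cs w (phi cs v (t, 0)) := by
    rw [map_mul, Equiv.Perm.mul_apply]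
  rw [nn, this, phi_apply cs v t 0, zero_add, phi_apply cs w, nn]

lemma nn_simple (i : B) (t : W) : nn cs (σ i) t = if t = σ i then 1 else 0 := by
  rw [nn, phi_simple, eta_apply, zero_add]

lemma nn_conj_simple (i : B) : ∀ ω : List B,
    nn cs (πw ω * σ i * (πw ω)⁻¹) (πw ω * σ i * (πw ω)⁻¹) = 1 := by
  intro ω
  induction ω with
  | nil => simp [nn_simple]
  | cons j ω ih =>
    set v := πw ω with hv
    set τ := v * σ i * v⁻¹ with hτ
    have hτ2 : τ * τ = 1 := by
      rw [hτ]; simp [mul_assoc]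
    have hτinv : τ⁻¹ = τ := by
      rw [hτ]; simp [mul_assoc]
    have ht : πw (j :: ω) * σ i * (πw (j :: ω))⁻¹ = σ j * τ * σ j := by
      rw [cs.wordProd_cons, hτ]
      simp [mul_assoc]
      rfl
    rw [ht]
    set t := σ j * τ * σ j with htt
    have hts : t = σ j ↔ τ = σ j := by
      rw [htt]
      constructor
      · intro h
        have := congrArg (fun x => σ j * x * σ j) h
        simpa [mul_assoc] using this
      · intro h; rw [h]; simp
    have hdec : t = σ j * (τ * σ j) := by rw [htt, mul_assoc]
    have h1 : nn cs (τ * σ j) t = (if τ = σ j then 1 else 0) + nn cs τ τ := by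
      rw [nn_mul]
      have harg : σ j * t * (σ j)⁻¹ = τ := by
        rw [htt]; simp [mul_assoc]
      rw [harg, nn_simple, if_congr hts rfl rfl]
    have h2 : nn cs t t = nn cs (τ * σ j) t + nn cs (σ j) ((τ * σ j) * t * (τ * σ j)⁻¹) := by
      nth_rewrite 1 [hdec]
      rw [nn_mul]
    have harg2 : (τ * σ j) * t * (τ * σ j)⁻¹ = τ := by
      rw [htt, mul_inv_rev, hτinv, cs.inv_simple]
      calc τ * σ j * (σ j * τ * σ j) * (σ j * τ)
          = τ * (σ j * σ j) * τ * (σ j * σ j) * τ := by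
            generalize σ j = p; generalize τ = q; group
        _ = τ * τ * τ := by simp
        _ = τ := by rw [hτ2, one_mul]
    rw [h2, h1, harg2, nn_simple, ih]
    generalize (if τ = σ j then (1 : ZMod 2) else 0) = x
    rw [show x + 1 + x = 1 + (x + x) by ring, zmod2_add_self, add_zero]

lemma nn_reflection_self {t : W} (ht : cs.IsReflection t) : nn cs t t = 1 := by
  obtain ⟨w, i, rfl⟩ := ht
  obtain ⟨ω, rfl⟩ := cs.wordProd_surjective w
  exact nn_conj_simple cs i ω

lemma count_ris (ω : List B) (t : W) :
    (((cs.rightInvSeq ω).count t : ℕ) : ZMod 2) = nn cs (πw ω) t := by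
  induction ω with
  | nil => simp [nn]
  | cons i ω ih =>
    have hris : cs.rightInvSeq (i :: ω) = ((πw ω)⁻¹ * σ i * πw ω) :: cs.rightInvSeq ω := rfl
    rw [hris, List.count_cons, cs.wordProd_cons, nn_mul, nn_simple]
    have hiff : ((πw ω)⁻¹ * σ i * πw ω = t) ↔ (πw ω * t * (πw ω)⁻¹ = σ i) := by
      constructor
      · rintro rfl; simp [mul_assoc]
      · intro h; rw [← h]; simp [mul_assoc]
    by_cases hc : πw ω * t * (πw ω)⁻¹ = σ i
    · rw [if_pos hc]
      have : ((πw ω)⁻¹ * σ i * πw ω == t) = true := beq_iff_eq.mpr (hiff.mpr hc)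
      rw [this, if_pos rfl]
      push_cast
      rw [ih]
    · rw [if_neg hc]
      have : ¬ (((πw ω)⁻¹ * σ i * πw ω == t) = true) := by
        rw [beq_iff_eq]; exact fun h => hc (hiff.mp h)
      rw [if_neg this]
      push_cast
      rw [ih]
lemma mem_ris_iff_nn {ω : List B} (hω : cs.IsReduced ω) (t : W) :
    t ∈ cs.rightInvSeq ω ↔ nn cs (πw ω) t = 1 := by
  constructor
  · intro h
    rw [← count_ris]
    rw [List.count_eq_one_of_mem (hω.nodup_rightInvSeq) h]
    rfl
  · intro h
    by_contra hmem
    rw [← count_ris, List.count_eq_zero.mpr hmem] at h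
    simp at h

lemma isRightInversion_iff_nn {t : W} (ht : cs.IsReflection t) (w : W) :
    cs.IsRightInversion w t ↔ nn cs w t = 1 := by
  constructor
  · intro h
    by_contra hne
    have h0 : nn cs w t = 0 := zmod2_eq_zero_of_ne_one hne
    have h1 : nn cs (w * t) t = 1 := by
      rw [nn_mul, nn_reflection_self cs ht, ht.inv, mul_assoc, ht.mul_self, mul_one, h0, add_zero]
    obtain ⟨ω, hred, hprod⟩ := cs.exists_reduced_word' (w * t)
    rw [hprod] at h1
    have hmem := (mem_ris_iff_nn cs hred t).mpr h1
    have := (cs.isRightInversion_of_mem_rightInvSeq hred hmem).2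
    rw [← hprod, mul_assoc, ht.mul_self, mul_one] at this
    exact absurd h.2 (by omega)
  · intro h
    obtain ⟨ω, hred, hprod⟩ := cs.exists_reduced_word' w
    rw [hprod] at h ⊢
    exact cs.isRightInversion_of_mem_rightInvSeq hred ((mem_ris_iff_nn cs hred t).mpr h)

lemma strong_exchange {ω : List B} (hω : cs.IsReduced ω) {t : W} (ht : cs.IsReflection t)
    (h : ℓ (πw ω * t) < ℓ (πw ω)) :
    ∃ j, j < ω.length ∧ πw ω * t = πw (ω.eraseIdx j) := by
  have hmem : t ∈ cs.rightInvSeq ω :=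
    (mem_ris_iff_nn cs hω t).mpr ((isRightInversion_iff_nn cs ht _).mp ⟨ht, h⟩)
  obtain ⟨j, hj, hjt⟩ := List.mem_iff_getElem.mp hmem
  rw [cs.length_rightInvSeq] at hj
  refine ⟨j, hj, ?_⟩
  have := cs.wordProd_mul_getD_rightInvSeq ω j
  rw [List.getD_eq_getElem _ 1 (by rwa [cs.length_rightInvSeq]), hjt] at this
  exact this

lemma exists_reduced_sublist (ω : List B) :
    ∃ ρ, ρ.Sublist ω ∧ cs.IsReduced ρ ∧ πw ρ = πw ω := by
  induction ω using List.reverseRecOn with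
  | nil => exact ⟨[], List.Sublist.refl _, by simp [CoxeterSystem.IsReduced], rfl⟩
  | append_singleton ω' i ih =>
    obtain ⟨ρ', hsub, hred, hprod⟩ := ih
    have hred' : ℓ (πw ω') = ρ'.length := by rw [← hprod]; exact hred
    have hπ : πw (ω' ++ [i]) = πw ω' * σ i := by
      rw [cs.wordProd_append, cs.wordProd_singleton]
    rcases cs.length_mul_simple (πw ω') i with h | h
    · refine ⟨ρ' ++ [i], hsub.append (List.Sublist.refl _), ?_, ?_⟩
      · show ℓ (πw (ρ' ++ [i])) = _
        rw [cs.wordProd_append, cs.wordProd_singleton, hprod, h]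
        rw [List.length_append, List.length_singleton]
        omega
      · rw [cs.wordProd_append, cs.wordProd_singleton, hprod, hπ]
    · have hlt : ℓ (πw ρ' * σ i) < ℓ (πw ρ') := by rw [hprod]; omega
      obtain ⟨j, hj, hje⟩ := strong_exchange cs hred (cs.isReflection_simple i) hlt
      refine ⟨ρ'.eraseIdx j, ?_, ?_, ?_⟩
      · exact ((ρ'.eraseIdx_sublist j).trans hsub).trans (List.sublist_append_left ω' [i])
      · show ℓ (πw (ρ'.eraseIdx j)) = _
        rw [← hje, hprod, List.length_eraseIdx_of_lt hj]
        omega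
      · rw [← hje, hprod, hπ]

lemma bruhatLE_refl (w : W) : BruhatLE cs w w := Relation.ReflTransGen.refl

lemma edge_mul_simple {u : W} {i : B} (h : ℓ u < ℓ (u * σ i)) :
    BruhatEdge cs u (u * σ i) :=
  ⟨σ i, cs.isReflection_simple i, rfl, h⟩

lemma edge_of_desc {u : W} {i : B} (h : ℓ (u * σ i) < ℓ u) :
    BruhatEdge cs (u * σ i) u :=
  ⟨σ i, cs.isReflection_simple i, by simp [mul_assoc], h⟩

lemma length_le_of_bruhatLE {u w : W} (h : BruhatLE cs u w) : ℓ u ≤ ℓ w := by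
  induction h with
  | refl => exact le_refl _
  | tail _ hedge ih =>
    obtain ⟨t, _, _, hlt⟩ := hedge
    omega

lemma eq_of_bruhatLE_of_length_le {u w : W} (h : BruhatLE cs u w) (hl : ℓ w ≤ ℓ u) : u = w := by
  rcases (Relation.ReflTransGen.cases_tail h) with rfl | ⟨c, hc, hedge⟩
  · rfl
  · obtain ⟨t, _, _, hlt⟩ := hedge
    have := length_le_of_bruhatLE cs hc
    omega

lemma exists_reduced_sublist_of_le {u w : W} (h : BruhatLE cs u w) :
    ∀ ω : List B, cs.IsReduced ω → πw ω = w →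
      ∃ ρ, ρ.Sublist ω ∧ cs.IsReduced ρ ∧ πw ρ = u := by
  induction h using Relation.ReflTransGen.head_induction_on with
  | refl => exact fun ω hω hπ => ⟨ω, List.Sublist.refl _, hω, hπ⟩
  | head hedge _ ih =>
    intro ω hω hπ
    obtain ⟨ρ₁, hs1, hr1, hp1⟩ := ih ω hω hπ
    rename_i a c _
    obtain ⟨t, ht, hc, hl⟩ := hedge
    have ha : πw ρ₁ * t = a := by
      rw [hp1, hc, mul_assoc, ht.mul_self, mul_one]
    have hlt : ℓ (πw ρ₁ * t) < ℓ (πw ρ₁) := by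
      rw [ha, hp1, hc] at *
      rwa [← hc] at hl
    obtain ⟨j, hj, hje⟩ := strong_exchange cs hr1 ht hlt
    obtain ⟨ρ, hs, hr, hp⟩ := exists_reduced_sublist cs (ρ₁.eraseIdx j)
    exact ⟨ρ, hs.trans ((ρ₁.eraseIdx_sublist j).trans hs1), hr,
      by rw [hp, ← hje, ha]⟩

lemma reduced_concat {ω' : List B} {i : B} (h : cs.IsReduced (ω' ++ [i])) :
    cs.IsReduced ω' ∧ ℓ (πw ω') + 1 = ℓ (πw ω' * σ i) := by
  have hπ : πw (ω' ++ [i]) = πw ω' * σ i := by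
    rw [cs.wordProd_append, cs.wordProd_singleton]
  have hlen : ℓ (πw ω' * σ i) = ω'.length + 1 := by
    rw [← hπ, h, List.length_append, List.length_singleton]
  have h1 := cs.length_wordProd_le ω'
  have h2 := cs.length_mul_simple (πw ω') i
  constructor
  · show ℓ (πw ω') = _
    omega
  · omega

lemma exists_reduced_concat {w : W} {i : B} (h : ℓ (w * σ i) < ℓ w) :
    ∃ ω₀, cs.IsReduced ω₀ ∧ πw ω₀ = w * σ i ∧ cs.IsReduced (ω₀ ++ [i]) ∧ πw (ω₀ ++ [i]) = w := by
  obtain ⟨ω₀, hred, hprod⟩ := cs.exists_reduced_word' (w * σ i)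
  have hπ : πw (ω₀ ++ [i]) = w := by
    rw [cs.wordProd_append, cs.wordProd_singleton, ← hprod, mul_assoc]
    simp
  have h2 := cs.length_mul_simple w i
  have h3 : ℓ (w * σ i) = ω₀.length := by rw [hprod]; exact hred
  refine ⟨ω₀, hred, hprod.symm, ?_, hπ⟩
  show ℓ (πw (ω₀ ++ [i])) = _
  rw [hπ, List.length_append, List.length_singleton]
  omega

lemma SBZ : ∀ n : ℕ,
    (∀ ω ρ : List B, cs.IsReduced ω → ω.length ≤ n → ρ.Sublist ω → cs.IsReduced ρ →
       BruhatLE cs (πw ρ) (πw ω)) ∧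
    (∀ (i : B) (a b : W), BruhatLE cs a b → ℓ a < ℓ (a * σ i) → ℓ b ≤ n →
       ℓ b < ℓ (b * σ i) → BruhatLE cs (a * σ i) (b * σ i)) := by
  intro n
  induction n using Nat.strong_induction_on with
  | _ n ih =>
  constructor
  · intro ω ρ hω hlen hsub hρ
    rcases List.eq_nil_or_concat ω with rfl | ⟨ω', i, rfl⟩
    · rw [List.sublist_nil.mp hsub]
      exact bruhatLE_refl cs _
    · simp only [List.concat_eq_append] at hsub hω hlen ⊢
      obtain ⟨hω', hasc⟩ := reduced_concat cs hω
      have hπ : πw (ω' ++ [i]) = πw ω' * σ i := by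
        rw [cs.wordProd_append, cs.wordProd_singleton]
      have hlen' : ω'.length + 1 ≤ n := by
        rw [List.length_append, List.length_singleton] at hlen; omega
      rw [List.sublist_append_iff] at hsub
      obtain ⟨ρ₁, ρ₂, rfl, hs1, hs2⟩ := hsub
      have hedge : BruhatEdge cs (πw ω') (πw (ω' ++ [i])) := by
        rw [hπ]
        exact edge_mul_simple cs (by omega)
      rcases List.sublist_singleton.mp hs2 with rfl | rfl
      · rw [List.append_nil] at hρ ⊢
        have h1 : BruhatLE cs (πw ρ₁) (πw ω') :=
          (ih ω'.length (by omega)).1 ω' ρ₁ hω' le_rfl hs1 hρ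
        exact h1.tail hedge
      · obtain ⟨hρ₁, hascρ⟩ := reduced_concat cs hρ
        have h1 : BruhatLE cs (πw ρ₁) (πw ω') :=
          (ih ω'.length (by omega)).1 ω' ρ₁ hω' le_rfl hs1 hρ₁
        have hωlen : ℓ (πw ω') = ω'.length := hω'
        have h2 := (ih ω'.length (by omega)).2 i (πw ρ₁) (πw ω') h1
          (by omega) (by omega) (by omega)
        rw [hπ, cs.wordProd_append, cs.wordProd_singleton]
        exact h2
  · intro i a b hab hasc
    induction hab with
    | refl =>
      intro _ _
      exact bruhatLE_refl cs _
    | @tail c b' hac hedge ihz =>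
      intro hbn hdesc
      obtain ⟨t, ht, rfl, hlt⟩ := hedge
      by_cases hcs : ℓ c < ℓ (c * σ i)
      · have h1 : BruhatLE cs (a * σ i) (c * σ i) := ihz (by omega) hcs
        refine h1.tail ⟨σ i * t * σ i, ?_, ?_, ?_⟩
        · have := ht.conj (σ i)
          simpa using this
        · simp [mul_assoc]
        · have hc1 : ℓ (c * σ i) = ℓ c + 1 := by
            have := cs.length_mul_simple c i
            omega
          omega
      · push_neg at hcs
        have hlt2 : ℓ (c * σ i) < ℓ c :=
          lt_of_le_of_ne hcs (cs.length_mul_simple_ne c i)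
        obtain ⟨ω₀, hred0, hπ0, hredc, hπc⟩ := exists_reduced_concat cs hlt2
        obtain ⟨ρ, hsub, hρred, hρπ⟩ := exists_reduced_sublist_of_le cs hac (ω₀ ++ [i]) hredc hπc
        rw [List.sublist_append_iff] at hsub
        obtain ⟨ρ₁, ρ₂, rfl, hs1, hs2⟩ := hsub
        have hclen : ℓ c = ω₀.length + 1 := by
          have := hredc
          rw [CoxeterSystem.IsReduced, hπc, List.length_append, List.length_singleton] at this
          omega
        rcases List.sublist_singleton.mp hs2 with rfl | rfl
        · -- ρ₂ = [] : a ≤ c * σ i, and a * σ i has reduced word ρ₁ ++ [i]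
          rw [List.append_nil] at hρred hρπ
          have hal : ℓ a = ρ₁.length := by rw [← hρπ]; exact hρred
          have ha1 : ℓ (a * σ i) = ℓ a + 1 := by
            have := cs.length_mul_simple a i
            omega
          have hared : cs.IsReduced (ρ₁ ++ [i]) := by
            show ℓ (πw (ρ₁ ++ [i])) = _
            rw [cs.wordProd_append, cs.wordProd_singleton, hρπ, ha1,
              List.length_append, List.length_singleton]
            omega
          have h2 : BruhatLE cs (πw (ρ₁ ++ [i])) (πw (ω₀ ++ [i])) :=
            (ih (ℓ c) (by omega)).1 (ω₀ ++ [i]) (ρ₁ ++ [i]) hredc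
              (by rw [List.length_append, List.length_singleton]; omega)
              (hs1.append (List.Sublist.refl _)) hared
          have heq : πw (ρ₁ ++ [i]) = a * σ i := by
            rw [cs.wordProd_append, cs.wordProd_singleton, hρπ]
          rw [heq, hπc] at h2
          exact (h2.tail ⟨t, ht, rfl, hlt⟩).tail ⟨σ i, cs.isReflection_simple i, rfl, hdesc⟩
        · -- ρ = ρ₁ ++ [i] : contradiction with hasc
          exfalso
          obtain ⟨hρ₁red, hascρ⟩ := reduced_concat cs hρred
          have hπa : πw ρ₁ * σ i = a := by
            rw [← cs.wordProd_singleton (i := i), ← cs.wordProd_append]; exact hρπ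
          have hxa : a * σ i = πw ρ₁ := by rw [← hπa, mul_assoc]; simp
          have h3 : ℓ (a * σ i) < ℓ a := by
            rw [hxa, ← hπa]
            omega
          omega

lemma le_of_reduced_sublist {ω ρ : List B} (hω : cs.IsReduced ω) (hsub : ρ.Sublist ω)
    (hρ : cs.IsReduced ρ) : BruhatLE cs (πw ρ) (πw ω) :=
  (SBZ cs ω.length).1 ω ρ hω le_rfl hsub hρ

/-- Lifting property, ascent case: if `u ≤ w`, `w·sᵢ < w` and `u < u·sᵢ`, then `u ≤ w·sᵢ`. -/
lemma lift_asc {u w : W} {i : B} (huw : BruhatLE cs u w)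
    (hw : ℓ (w * σ i) < ℓ w) (hu : ℓ u < ℓ (u * σ i)) :
    BruhatLE cs u (w * σ i) := by
  obtain ⟨ω₀, hred0, hπ0, hredc, hπc⟩ := exists_reduced_concat cs hw
  obtain ⟨ρ, hsub, hρred, hρπ⟩ := exists_reduced_sublist_of_le cs huw (ω₀ ++ [i]) hredc hπc
  rw [List.sublist_append_iff] at hsub
  obtain ⟨ρ₁, ρ₂, rfl, hs1, hs2⟩ := hsub
  rcases List.sublist_singleton.mp hs2 with rfl | rfl
  · rw [List.append_nil] at hρred hρπ
    have := le_of_reduced_sublist cs hred0 hs1 hρred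
    rwa [hρπ, hπ0] at this
  · exfalso
    obtain ⟨hρ₁red, hascρ⟩ := reduced_concat cs hρred
    have hπa : πw ρ₁ * σ i = u := by
      rw [← cs.wordProd_singleton (i := i), ← cs.wordProd_append]; exact hρπ
    have hxa : u * σ i = πw ρ₁ := by rw [← hπa, mul_assoc]; simp
    have h3 : ℓ (u * σ i) < ℓ u := by
      rw [hxa, ← hπa]
      omega
    omega

/-- Lifting property, descent case: if `u ≤ w`, `w·sᵢ < w` and `u·sᵢ < u`,
then `u·sᵢ ≤ w·sᵢ`. -/
lemma lift_desc {u w : W} {i : B} (huw : BruhatLE cs u w)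
    (hw : ℓ (w * σ i) < ℓ w) (hu : ℓ (u * σ i) < ℓ u) :
    BruhatLE cs (u * σ i) (w * σ i) := by
  obtain ⟨ω₀, hred0, hπ0, hredc, hπc⟩ := exists_reduced_concat cs hw
  obtain ⟨ρ, hsub, hρred, hρπ⟩ := exists_reduced_sublist_of_le cs huw (ω₀ ++ [i]) hredc hπc
  rw [List.sublist_append_iff] at hsub
  obtain ⟨ρ₁, ρ₂, rfl, hs1, hs2⟩ := hsub
  rcases List.sublist_singleton.mp hs2 with rfl | rfl
  · -- u ≤ w * σ i, and u*σi → u edge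
    rw [List.append_nil] at hρred hρπ
    have h1 := le_of_reduced_sublist cs hred0 hs1 hρred
    rw [hρπ, hπ0] at h1
    exact Relation.ReflTransGen.trans (Relation.ReflTransGen.single (edge_of_desc cs hu)) h1
  · obtain ⟨hρ₁red, hascρ⟩ := reduced_concat cs hρred
    have hπa : πw ρ₁ * σ i = u := by
      rw [← cs.wordProd_singleton (i := i), ← cs.wordProd_append]; exact hρπ
    have hxa : u * σ i = πw ρ₁ := by rw [← hπa, mul_assoc]; simp
    have h1 := le_of_reduced_sublist cs hred0 hs1 hρ₁red
    rw [hπ0] at h1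
    rwa [hxa]

noncomputable def aval (n : ℕ) : ℤ := (dPoly n).eval 1

noncomputable def eder (n : ℕ) : ℤ := (Polynomial.derivative (dPoly n)).eval 1

lemma aval_zero : aval 0 = 1 := by simp [aval, dPoly]
lemma aval_one : aval 1 = 1 := by simp [aval, dPoly]
lemma aval_two : aval 2 = 1 := by simp [aval, dPoly]
lemma eder_zero : eder 0 = 0 := by simp [eder, dPoly]
lemma eder_one : eder 1 = 1 := by simp [eder, dPoly]
lemma eder_two : eder 2 = 2 := by simp [eder, dPoly]

lemma aval_rec (n : ℕ) : aval (n + 3) = aval (n + 2) + 2 * aval (n + 1) := by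
  rw [aval, dPoly]
  simp [aval]

lemma eder_rec (n : ℕ) :
    eder (n + 3) = aval (n + 2) + eder (n + 2) + aval (n + 1) + 2 * eder (n + 1) := by
  rw [eder, dPoly]
  simp [aval, eder]
  ring

lemma aval_eder_pos (n : ℕ) : (1 ≤ aval n ∧ 1 ≤ aval (n+1) ∧ 1 ≤ aval (n+2)) ∧
    (0 ≤ eder n ∧ 0 ≤ eder (n+1) ∧ 0 ≤ eder (n+2)) := by
  induction n with
  | zero => simp [aval_zero, aval_one, aval_two, eder_zero, eder_one, eder_two]
  | succ n ih =>
    obtain ⟨⟨a0, a1, a2⟩, ⟨e0, e1, e2⟩⟩ := ih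
    refine ⟨⟨a1, a2, ?_⟩, ⟨e1, e2, ?_⟩⟩
    · rw [aval_rec]; omega
    · rw [eder_rec]; omega

lemma aval_pos (n : ℕ) : 1 ≤ aval n := ((aval_eder_pos n).1).1

lemma eder_nonneg (n : ℕ) : 0 ≤ eder n := ((aval_eder_pos n).2).1

lemma aval_mono (n : ℕ) : aval n ≤ aval (n + 1) := by
  rcases n with _ | _ | n
  · rw [aval_zero, aval_one]
  · rw [aval_one, aval_two]
  · show aval (n + 2) ≤ aval (n + 3)
    rw [aval_rec]
    have := aval_pos (n + 1)
    omega

lemma eder_step (n : ℕ) : aval n + eder n ≤ eder (n + 1) := by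
  rcases n with _ | _ | n
  · rw [aval_zero, eder_zero, eder_one]; omega
  · rw [aval_one, eder_one, eder_two]; omega
  · show aval (n + 2) + eder (n + 2) ≤ eder (n + 3)
    rw [eder_rec]
    have := aval_pos (n + 1)
    have := eder_nonneg (n + 1)
    omega

lemma jacobsthal_rec (n : ℕ) : jacobsthal (n + 2) = jacobsthal (n + 1) + 2 * jacobsthal n := by
  rw [jacobsthal]

def ClosedForm (n : ℕ) : Prop :=
  3 * aval n = 2 ^ n - (-1 : ℤ) ^ n ∧ aval n = jacobsthal n ∧
    9 * eder n = 2 * (2 ^ n - (-1 : ℤ) ^ n) + 3 * n * 2 ^ (n - 1)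

lemma closedForm_pair (n : ℕ) : ClosedForm (n + 1) ∧ ClosedForm (n + 2) := by
  induction n with
  | zero =>
    refine ⟨⟨?_, ?_, ?_⟩, ⟨?_, ?_, ?_⟩⟩
    · rw [aval_one]; norm_num
    · rw [aval_one]; rw [jacobsthal]
    · rw [eder_one]; norm_num
    · rw [aval_two]; norm_num
    · rw [aval_two, jacobsthal_rec, jacobsthal, jacobsthal]; norm_num
    · rw [eder_two]; norm_num
  | succ n ih =>
    obtain ⟨⟨ha1, hj1, he1⟩, ⟨ha2, hj2, he2⟩⟩ := ih
    refine ⟨⟨ha2, hj2, he2⟩, ⟨?_, ?_, ?_⟩⟩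
    · rw [aval_rec]
      have h1 : ((-1 : ℤ)) ^ (n + 3) = (-1) ^ (n+1) := by ring
      have h2 : ((-1 : ℤ)) ^ (n + 2) = -(-1) ^ (n+1) := by ring
      have h3 : (2 : ℤ) ^ (n + 3) = 4 * 2 ^ (n + 1) := by ring
      have h4 : (2 : ℤ) ^ (n + 2) = 2 * 2 ^ (n + 1) := by ring
      rw [h1, h3]
      rw [h4, h2] at ha2
      linarith [ha1, ha2]
    · rw [aval_rec, jacobsthal_rec, hj1, hj2]
    · rw [eder_rec]
      have hs1 : n + 1 - 1 = n := by omega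
      have hs2 : n + 2 - 1 = n + 1 := by omega
      have hs3 : n + 3 - 1 = n + 2 := by omega
      rw [hs3]
      rw [hs1] at he1
      rw [hs2] at he2
      push_cast
      push_cast at he1 he2
      linear_combination 3 * ha2 + he2 + 3 * ha1 + 2 * he1

lemma closedForm (n : ℕ) (hn : 1 ≤ n) : ClosedForm n := by
  rcases n with _ | n
  · omega
  · exact (closedForm_pair n).1

lemma bounds {R : W → W → Polynomial ℤ} (hR : IsRFamily cs R) :
    ∀ N u w n, BruhatLE cs u w → ℓ w ≤ N → ℓ w = ℓ u + n →
      (1 ≤ (R u w).eval 2 ∧ (R u w).eval 2 ≤ aval n) ∧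
      ((n : ℤ) ≤ (Polynomial.derivative (R u w)).eval 2 ∧
        (Polynomial.derivative (R u w)).eval 2 ≤ eder n) := by
  have base : ∀ u w, BruhatLE cs u w → ℓ w = ℓ u →
      (1 ≤ (R u w).eval 2 ∧ (R u w).eval 2 ≤ aval 0) ∧
      ((0 : ℤ) ≤ (Polynomial.derivative (R u w)).eval 2 ∧
        (Polynomial.derivative (R u w)).eval 2 ≤ eder 0) := by
    intro u w hle hlen
    have : u = w := eq_of_bruhatLE_of_length_le cs hle (le_of_eq hlen)
    subst this
    rw [hR.2.1 u]
    simp [aval_zero, eder_zero]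
  intro N
  induction N with
  | zero =>
    intro u w n hle hN hn
    have hn0 : n = 0 := by omega
    subst hn0
    exact base u w hle (by omega)
  | succ N ihN =>
    intro u w n hle hN hn
    rcases Nat.eq_zero_or_pos n with rfl | hn1
    · exact base u w hle (by omega)
    have hw1 : w ≠ 1 := by
      intro h
      rw [h, cs.length_one] at hn
      omega
    obtain ⟨i, hi⟩ := cs.exists_rightDescent_of_ne_one hw1
    have hdesc : ℓ (w * σ i) < ℓ w := hi
    have hrec := hR.2.2 u w i hdesc
    have hw' : ℓ (w * σ i) + 1 = ℓ w := by
      have := cs.length_mul_simple w i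
      omega
    rcases cs.length_mul_simple u i with hu | hu
    · -- ascent case : ℓ (u * σ i) = ℓ u + 1
      have h2 := hrec.2 (by omega)
      have hle1 : BruhatLE cs u (w * σ i) := lift_asc cs hle hdesc (by omega)
      have ih1 := ihN u (w * σ i) (n - 1) hle1 (by omega) (by omega)
      have hev : (R u w).eval 2
          = (R u (w * σ i)).eval 2 + 2 * (R (u * σ i) (w * σ i)).eval 2 := by
        rw [h2]; simp
      have hdev : (Polynomial.derivative (R u w)).eval 2
          = (R u (w * σ i)).eval 2 + (Polynomial.derivative (R u (w * σ i))).eval 2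
            + (R (u * σ i) (w * σ i)).eval 2
            + 2 * (Polynomial.derivative (R (u * σ i) (w * σ i))).eval 2 := by
        rw [h2]
        simp [derivative_mul]
        ring
      have c1 : ((n - 1 : ℕ) : ℤ) = (n : ℤ) - 1 := by omega
      by_cases hc : BruhatLE cs (u * σ i) (w * σ i)
      · have hlen2 : ℓ (u * σ i) ≤ ℓ (w * σ i) := length_le_of_bruhatLE cs hc
        have hn2 : 2 ≤ n := by omega
        have hn3 : 3 ≤ n := by
          by_contra hcon
          have hnn : n = 2 := by omega
          have heq : u * σ i = w * σ i :=
            eq_of_bruhatLE_of_length_le cs hc (by omega)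
          have : u = w := mul_right_cancel heq
          rw [this] at hn
          omega
        have ih2 := ihN (u * σ i) (w * σ i) (n - 2) hc (by omega) (by omega)
        have c2 : ((n - 2 : ℕ) : ℤ) = (n : ℤ) - 2 := by omega
        have harec : aval n = aval (n - 1) + 2 * aval (n - 2) := by
          have := aval_rec (n - 3)
          rw [show n - 3 + 3 = n by omega, show n - 3 + 2 = n - 1 by omega,
            show n - 3 + 1 = n - 2 by omega] at this
          exact this
        have herec : eder n = aval (n - 1) + eder (n - 1) + aval (n - 2) + 2 * eder (n - 2) := by
          have := eder_rec (n - 3)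
          rw [show n - 3 + 3 = n by omega, show n - 3 + 2 = n - 1 by omega,
            show n - 3 + 1 = n - 2 by omega] at this
          exact this
        obtain ⟨⟨p1, p2⟩, ⟨p3, p4⟩⟩ := ih1
        obtain ⟨⟨q1, q2⟩, ⟨q3, q4⟩⟩ := ih2
        rw [c1] at p3
        rw [c2] at q3
        refine ⟨⟨?_, ?_⟩, ⟨?_, ?_⟩⟩
        · rw [hev]; linarith
        · rw [hev, harec]; linarith
        · rw [hdev]; linarith
        · rw [hdev, herec]; linarith
      · have hR2 : R (u * σ i) (w * σ i) = 0 := hR.1 _ _ hc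
        rw [hR2] at hev hdev
        simp only [Polynomial.eval_zero, mul_zero, add_zero, Polynomial.derivative_zero] at hev hdev
        obtain ⟨⟨p1, p2⟩, ⟨p3, p4⟩⟩ := ih1
        rw [c1] at p3
        have hmono : aval (n - 1) ≤ aval n := by
          have := aval_mono (n - 1)
          rwa [show n - 1 + 1 = n by omega] at this
        have hstep : aval (n - 1) + eder (n - 1) ≤ eder n := by
          have := eder_step (n - 1)
          rwa [show n - 1 + 1 = n by omega] at this
        refine ⟨⟨?_, ?_⟩, ⟨?_, ?_⟩⟩
        · rw [hev]; linarith
        · rw [hev]; linarith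
        · rw [hdev]; linarith
        · rw [hdev]; linarith
    · -- descent case : ℓ (u * σ i) + 1 = ℓ u
      have h1 := hrec.1 (by omega)
      have hle' : BruhatLE cs (u * σ i) (w * σ i) := lift_desc cs hle hdesc (by omega)
      rw [h1]
      exact ihN (u * σ i) (w * σ i) n hle' (by omega) (by omega)

end StmtAux

theorem stmt19 {B W : Type*} [Group W] [Finite W] {M : CoxeterMatrix B}
    (cs : CoxeterSystem M W)
    (R : W → W → Polynomial ℤ) (hR : IsRFamily cs R)
    (u w : W) (huw : BruhatLE cs u w)
    (n : ℕ) (hn : cs.length w - cs.length u = n) (hn1 : 1 ≤ n) :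
    (1 ≤ (R u w).eval 2 ∧ (R u w).eval 2 ≤ (dPoly n).eval 1) ∧
    ((n : ℤ) ≤ (Polynomial.derivative (R u w)).eval 2 ∧
      (Polynomial.derivative (R u w)).eval 2 ≤ (Polynomial.derivative (dPoly n)).eval 1) ∧
    3 * (dPoly n).eval 1 = 2 ^ n - (-1 : ℤ) ^ n ∧
    (dPoly n).eval 1 = jacobsthal n ∧
    9 * (Polynomial.derivative (dPoly n)).eval 1
      = 2 * (2 ^ n - (-1 : ℤ) ^ n) + 3 * n * 2 ^ (n - 1) := by
  have hlu : cs.length u ≤ cs.length w := StmtAux.length_le_of_bruhatLE cs huw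
  have hn' : cs.length w = cs.length u + n := by omega
  obtain ⟨⟨b1, b2⟩, ⟨b3, b4⟩⟩ :=
    StmtAux.bounds cs hR (cs.length w) u w n huw le_rfl hn'
  obtain ⟨c3, c4, c5⟩ := StmtAux.closedForm n hn1
  rw [StmtAux.aval] at b2 c3 c4
  rw [StmtAux.eder] at b4 c5
  exact ⟨⟨b1, b2⟩, ⟨b3, b4⟩, c3, c4, c5⟩
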